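/- For all x, y ∈ ℍ² with d := (x₂ + y₂)/2 (the distance of the midpoint (x+y)/2 to ∂ℍ²): if |x - y| > 2d then τ̃_{ℍ²}(x,y) ≥ log(1 + √(|x-y|/d)), and if |x - y| ≤ 2d then τ̃_{ℍ²}(x,y) ≥ log(1 + 2|x-y|/√(4d² + |x-y|²)). -/

import Mathlib

/-- The scale invariant Cassinian metric
`τ̃_D(x,y) = log(1 + sup_{p ∈ ∂D} |x-y|/√(|x-p||y-p|))`. -/
noncomputable def scTau {E : Type*} [NormedAddCommGroup E] (D : Set E) (x y : E) : ℝ :=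
  Real.log (1 + ⨆ p : frontier D, ‖x - y‖ / Real.sqrt (‖x - (p : E)‖ * ‖y - (p : E)‖))

private lemma normsq2 (v : EuclideanSpace ℝ (Fin 2)) : ‖v‖ ^ 2 = (v 0) ^ 2 + (v 1) ^ 2 := by
  rw [EuclideanSpace.norm_eq, Real.sq_sqrt (by positivity)]
  simp [Fin.sum_univ_two, sq_abs]

private lemma abs1_le (v : EuclideanSpace ℝ (Fin 2)) : |v 1| ≤ ‖v‖ := by
  nlinarith [normsq2 v, norm_nonneg v, abs_nonneg (v 1), sq_abs (v 1), sq_nonneg (v 0)]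

private lemma aux_key1 (t0 d : ℝ) (ht0n : 0 ≤ t0) (hd0 : 0 < d) :
    ∀ b g : ℝ, 0 ≤ b → 0 ≤ g → t0 ≤ g → b ≤ d →
      t0 ^ 2 * b ^ 2 - 2 * t0 * b * g * d + g ^ 2 * d ^ 2 ≤ d ^ 2 * (b ^ 2 + g ^ 2) := by
  intro b g hb hg htg hbd
  nlinarith [mul_nonneg (mul_nonneg (mul_nonneg ht0n hb) hd0.le) (sub_nonneg.2 htg),
    mul_nonneg (mul_nonneg (sq_nonneg t0) hb) (sub_nonneg.2 hbd),
    mul_nonneg (sq_nonneg b) (sq_nonneg d),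
    mul_nonneg (mul_nonneg (sq_nonneg t0) hb) hd0.le]

private lemma aux_key2 (t0 d β γ : ℝ)
    (hk : t0 ^ 2 * |β| ^ 2 - 2 * t0 * |β| * |γ| * d + |γ| ^ 2 * d ^ 2
      ≤ d ^ 2 * (|β| ^ 2 + |γ| ^ 2))
    (hbg : β * γ = -(|β| * |γ|)) :
    (t0 * β + γ * d) ^ 2 ≤ d ^ 2 * (β ^ 2 + γ ^ 2) := by
  have h2 : 2 * t0 * d * (β * γ) = 2 * t0 * d * (-(|β| * |γ|)) := by rw [hbg]
  nlinarith [hk, h2, sq_abs β, sq_abs γ]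

private lemma aux_key3 (t0 d β γ : ℝ)
    (hk : t0 ^ 2 * |β| ^ 2 - 2 * t0 * |β| * |γ| * d + |γ| ^ 2 * d ^ 2
      ≤ d ^ 2 * (|β| ^ 2 + |γ| ^ 2))
    (hbg : β * γ = |β| * |γ|) :
    ((-t0) * β + γ * d) ^ 2 ≤ d ^ 2 * (β ^ 2 + γ ^ 2) := by
  have h2 : 2 * t0 * d * (β * γ) = 2 * t0 * d * (|β| * |γ|) := by rw [hbg]
  nlinarith [hk, h2, sq_abs β, sq_abs γ]

private lemma aux_case2 (γ β d q : ℝ) :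
    (γ ^ 2 + (d + β) ^ 2) * ((-γ) ^ 2 + (d - β) ^ 2)
      ≤ ((4 * d ^ 2 + (4 * γ ^ 2 + 4 * β ^ 2)) / 4) ^ 2 := by
  nlinarith [sq_nonneg (β * γ), sq_nonneg (β ^ 2 - γ ^ 2), sq_nonneg (β * d), sq_nonneg (γ * d)]

private lemma aux_ht0 (q d β γ : ℝ) (h1 : q > 2 * d) (h2 : 0 < d)
    (h3 : q ^ 2 = 4 * γ ^ 2 + 4 * β ^ 2) : (0:ℝ) ≤ β ^ 2 + γ ^ 2 - d ^ 2 := by nlinarith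

private lemma aux_hb2 (d β x1 y1 : ℝ) (h1 : 0 < x1) (h2 : 0 < y1)
    (h3 : x1 = d + β) (h4 : y1 = d - β) : β ^ 2 ≤ d ^ 2 := by nlinarith

private lemma aux_norm (a e : ℝ) (h : a ^ 2 = 0 ^ 2 + (e / 2) ^ 2) (ha : 0 ≤ a) (he : 0 < e) :
    a = e / 2 := by nlinarith

private lemma aux_fin1 (A q d β γ : ℝ) (h1 : A ≤ d ^ 2 * (β ^ 2 + γ ^ 2))
    (h2 : q ^ 2 = 4 * γ ^ 2 + 4 * β ^ 2) : 0 ^ 2 + 4 * A ≤ (q * d) ^ 2 := by nlinarith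

set_option maxHeartbeats 2000000 in
theorem stmt14 (x y : EuclideanSpace ℝ (Fin 2))
    (hx : x ∈ {z : EuclideanSpace ℝ (Fin 2) | z 1 > 0})
    (hy : y ∈ {z : EuclideanSpace ℝ (Fin 2) | z 1 > 0})
    (d : ℝ) (hd : d = (x 1 + y 1) / 2) :
    (‖x - y‖ > 2 * d →
      scTau {z : EuclideanSpace ℝ (Fin 2) | z 1 > 0} x y
        ≥ Real.log (1 + Real.sqrt (‖x - y‖ / d))) ∧
    (‖x - y‖ ≤ 2 * d →
      scTau {z : EuclideanSpace ℝ (Fin 2) | z 1 > 0} x y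
        ≥ Real.log (1 + 2 * ‖x - y‖ / Real.sqrt (4 * d ^ 2 + ‖x - y‖ ^ 2))) := by
  have hx1 : 0 < x 1 := hx
  have hy1 : 0 < y 1 := hy
  have hd0 : 0 < d := by rw [hd]; linarith
  set D : Set (EuclideanSpace ℝ (Fin 2)) := {z : EuclideanSpace ℝ (Fin 2) | z 1 > 0} with hD
  set q : ℝ := ‖x - y‖ with hq
  have hq0 : 0 ≤ q := norm_nonneg _
  have hopen : IsOpen D := by
    have h : D = (fun z : EuclideanSpace ℝ (Fin 2) => z 1) ⁻¹' Set.Ioi 0 := rfl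
    rw [h]
    exact isOpen_Ioi.preimage (PiLp.continuous_apply 2 _ 1)
  have hclosed : IsClosed {z : EuclideanSpace ℝ (Fin 2) | z 1 ≥ 0} := by
    have h : {z : EuclideanSpace ℝ (Fin 2) | z 1 ≥ 0}
        = (fun z : EuclideanSpace ℝ (Fin 2) => z 1) ⁻¹' Set.Ici 0 := rfl
    rw [h]
    exact isClosed_Ici.preimage (PiLp.continuous_apply 2 _ 1)
  have hfs : ∀ p ∈ frontier D, p 1 = 0 := by
    intro p hp
    have h1 : p 1 ≥ 0 := by
      have hsub : closure D ⊆ {z : EuclideanSpace ℝ (Fin 2) | z 1 ≥ 0} :=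
        closure_minimal (fun z hz => show (0:ℝ) ≤ z 1 from le_of_lt hz) hclosed
      exact hsub hp.1
    have h2 : p ∉ interior D := hp.2
    rw [hopen.interior_eq] at h2
    have h3 : ¬ ((0:ℝ) < p 1) := h2
    linarith [not_lt.mp h3]
  have hmem : ∀ c : ℝ, ((WithLp.equiv 2 (Fin 2 → ℝ)).symm ![c, 0] : EuclideanSpace ℝ (Fin 2))
      ∈ frontier D := by
    intro c
    set p : EuclideanSpace ℝ (Fin 2) := (WithLp.equiv 2 (Fin 2 → ℝ)).symm ![c, 0] with hp
    have hp1 : p 1 = 0 := by simp [hp]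
    constructor
    · rw [mem_closure_iff]
      intro o ho hpo
      obtain ⟨ε, hε, hball⟩ := Metric.isOpen_iff.mp ho p hpo
      set v : EuclideanSpace ℝ (Fin 2) := (WithLp.equiv 2 (Fin 2 → ℝ)).symm ![0, ε/2] with hv
      have hv1 : v 1 = ε/2 := by simp [hv]
      refine ⟨p + v, hball ?_, ?_⟩
      · rw [Metric.mem_ball, dist_eq_norm]
        have heq : p + v - p = v := by abel
        rw [heq]
        have hn : ‖v‖ = ε/2 := by
          have h2 := normsq2 v
          have hv0 : v 0 = 0 := by simp [hv]
          rw [hv0, hv1] at h2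
          exact aux_norm _ _ h2 (norm_nonneg v) hε
        rw [hn]; linarith
      · show (0:ℝ) < (p + v) 1
        have : (p + v) 1 = p 1 + v 1 := rfl
        rw [this, hp1, hv1]; linarith
    · rw [hopen.interior_eq]
      show ¬ ((0:ℝ) < p 1)
      rw [hp1]; exact lt_irrefl 0
  have hdist : ∀ (z : EuclideanSpace ℝ (Fin 2)) (c : ℝ),
      ‖z - (WithLp.equiv 2 (Fin 2 → ℝ)).symm ![c, 0]‖ ^ 2 = (z 0 - c) ^ 2 + (z 1) ^ 2 := by
    intro z c
    rw [normsq2]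
    have h0 : (z - (WithLp.equiv 2 (Fin 2 → ℝ)).symm ![c, 0]) 0 = z 0 - c := by
      have : (z - (WithLp.equiv 2 (Fin 2 → ℝ)).symm ![c, 0]) 0
          = z 0 - ((WithLp.equiv 2 (Fin 2 → ℝ)).symm ![c, 0] : EuclideanSpace ℝ (Fin 2)) 0 := rfl
      rw [this]; simp
    have h1 : (z - (WithLp.equiv 2 (Fin 2 → ℝ)).symm ![c, 0]) 1 = z 1 := by
      have : (z - (WithLp.equiv 2 (Fin 2 → ℝ)).symm ![c, 0]) 1
          = z 1 - ((WithLp.equiv 2 (Fin 2 → ℝ)).symm ![c, 0] : EuclideanSpace ℝ (Fin 2)) 1 := rfl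
      rw [this]; simp
    rw [h0, h1]
  have hxlow : ∀ p ∈ frontier D, x 1 ≤ ‖x - p‖ := by
    intro p hp
    have h := abs1_le (x - p)
    have hxp : (x - p) 1 = x 1 := by
      have : (x - p) 1 = x 1 - p 1 := rfl
      rw [this, hfs p hp]; ring
    rw [hxp] at h
    exact (le_abs_self _).trans h
  have hylow : ∀ p ∈ frontier D, y 1 ≤ ‖y - p‖ := by
    intro p hp
    have h := abs1_le (y - p)
    have hyp : (y - p) 1 = y 1 := by
      have : (y - p) 1 = y 1 - p 1 := rfl
      rw [this, hfs p hp]; ring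
    rw [hyp] at h
    exact (le_abs_self _).trans h
  have hpos : ∀ p : frontier D, 0 < ‖x - (p : EuclideanSpace ℝ (Fin 2))‖
      * ‖y - (p : EuclideanSpace ℝ (Fin 2))‖ := by
    rintro ⟨p, hp⟩
    exact mul_pos (lt_of_lt_of_le hx1 (hxlow p hp)) (lt_of_lt_of_le hy1 (hylow p hp))
  have hbdd : BddAbove (Set.range fun p : frontier D =>
      q / Real.sqrt (‖x - (p : EuclideanSpace ℝ (Fin 2))‖
        * ‖y - (p : EuclideanSpace ℝ (Fin 2))‖)) := by
    refine ⟨q / Real.sqrt (x 1 * y 1), ?_⟩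
    rintro r ⟨⟨p, hp⟩, rfl⟩
    have hs : Real.sqrt (x 1 * y 1) ≤ Real.sqrt (‖x - p‖ * ‖y - p‖) := by
      apply Real.sqrt_le_sqrt
      exact mul_le_mul (hxlow p hp) (hylow p hp) hy1.le ((hx1.le).trans (hxlow p hp))
    have hs0 : 0 < Real.sqrt (x 1 * y 1) := Real.sqrt_pos.mpr (by positivity)
    exact div_le_div_of_nonneg_left hq0 hs0 hs
  have main : ∀ T : ℝ, 0 ≤ T →
      (∃ c : ℝ, T * Real.sqrt (‖x - (WithLp.equiv 2 (Fin 2 → ℝ)).symm ![c, 0]‖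
        * ‖y - (WithLp.equiv 2 (Fin 2 → ℝ)).symm ![c, 0]‖) ≤ q) →
      scTau D x y ≥ Real.log (1 + T) := by
    rintro T hT ⟨c, hc⟩
    set p : frontier D := ⟨(WithLp.equiv 2 (Fin 2 → ℝ)).symm ![c, 0], hmem c⟩ with hpdef
    have hsp : 0 < Real.sqrt (‖x - (p : EuclideanSpace ℝ (Fin 2))‖
        * ‖y - (p : EuclideanSpace ℝ (Fin 2))‖) := Real.sqrt_pos.mpr (hpos p)
    have hfp : T ≤ q / Real.sqrt (‖x - (p : EuclideanSpace ℝ (Fin 2))‖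
        * ‖y - (p : EuclideanSpace ℝ (Fin 2))‖) := (le_div_iff₀ hsp).mpr hc
    have hsup : T ≤ ⨆ p : frontier D,
        q / Real.sqrt (‖x - (p : EuclideanSpace ℝ (Fin 2))‖
          * ‖y - (p : EuclideanSpace ℝ (Fin 2))‖) :=
      hfp.trans (le_ciSup hbdd p)
    unfold scTau
    rw [← hq]
    apply Real.log_le_log (by linarith)
    linarith
  set α : ℝ := (x 0 + y 0) / 2 with hα
  set γ : ℝ := (x 0 - y 0) / 2 with hγ
  set β : ℝ := (x 1 - y 1) / 2 with hβ
  have hdbx : x 1 = d + β := by rw [hd, hβ]; ring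
  have hdby : y 1 = d - β := by rw [hd, hβ]; ring
  have hqsq : q ^ 2 = 4 * γ ^ 2 + 4 * β ^ 2 := by
    rw [hq, normsq2]
    have h0 : (x - y) 0 = x 0 - y 0 := rfl
    have h1 : (x - y) 1 = x 1 - y 1 := rfl
    rw [h0, h1, hγ, hβ]; ring
  constructor
  · -- Case 1 : q > 2d
    intro hcase
    apply main _ (Real.sqrt_nonneg _)
    have ht0 : (0:ℝ) ≤ β ^ 2 + γ ^ 2 - d ^ 2 := aux_ht0 q d β γ hcase hd0 hqsq
    set t0 : ℝ := Real.sqrt (β ^ 2 + γ ^ 2 - d ^ 2) with ht0def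
    have ht0sq : t0 ^ 2 = β ^ 2 + γ ^ 2 - d ^ 2 := Real.sq_sqrt ht0
    have ht0n : 0 ≤ t0 := Real.sqrt_nonneg _
    have hb2 : β ^ 2 ≤ d ^ 2 := aux_hb2 d β (x 1) (y 1) hx1 hy1 hdbx hdby
    have keylem := aux_key1 t0 d ht0n hd0
    have habs_t : t0 ≤ |γ| := by
      rw [ht0def, ← Real.sqrt_sq_eq_abs]
      exact Real.sqrt_le_sqrt (by linarith [hb2])
    have hbd' : |β| ≤ d := by
      rw [← Real.sqrt_sq_eq_abs, ← Real.sqrt_sq hd0.le]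
      exact Real.sqrt_le_sqrt hb2
    have hk := keylem |β| |γ| (abs_nonneg β) (abs_nonneg γ) habs_t hbd'
    obtain ⟨t, htsq, htkey⟩ : ∃ t : ℝ, t ^ 2 = β ^ 2 + γ ^ 2 - d ^ 2 ∧
        (t * β + γ * d) ^ 2 ≤ d ^ 2 * (β ^ 2 + γ ^ 2) := by
      rcases le_or_gt (β * γ) 0 with h | h
      · refine ⟨t0, ht0sq, ?_⟩
        have habsm : |β * γ| = -(β * γ) := abs_of_nonpos h
        have hbg : β * γ = -(|β| * |γ|) := by rw [← abs_mul]; linarith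
        exact aux_key2 t0 d β γ hk hbg
      · refine ⟨-t0, by rw [← ht0sq]; ring, ?_⟩
        have habsm : |β * γ| = β * γ := abs_of_pos h
        have hbg : β * γ = |β| * |γ| := by rw [← abs_mul]; linarith
        exact aux_key3 t0 d β γ hk hbg
    refine ⟨α + t, ?_⟩
    have hX := hdist x (α + t)
    have hY := hdist y (α + t)
    have hx0 : x 0 - (α + t) = γ - t := by rw [hα, hγ]; ring
    have hy0 : y 0 - (α + t) = -γ - t := by rw [hα, hγ]; ring
    rw [hx0] at hX; rw [hy0] at hY
    have hprod : ‖x - (WithLp.equiv 2 (Fin 2 → ℝ)).symm ![α + t, 0]‖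
        * ‖y - (WithLp.equiv 2 (Fin 2 → ℝ)).symm ![α + t, 0]‖ ≤ q * d := by
      apply le_of_pow_le_pow_left₀ two_ne_zero (by positivity)
      have expand : (‖x - (WithLp.equiv 2 (Fin 2 → ℝ)).symm ![α + t, 0]‖
          * ‖y - (WithLp.equiv 2 (Fin 2 → ℝ)).symm ![α + t, 0]‖) ^ 2
          = ((γ - t) ^ 2 + (x 1) ^ 2) * ((-γ - t) ^ 2 + (y 1) ^ 2) := by
        rw [mul_pow, hX, hY]
      rw [expand, hdbx, hdby]
      have identity : ((γ - t) ^ 2 + (d + β) ^ 2) * ((-γ - t) ^ 2 + (d - β) ^ 2)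
          = (t ^ 2 - β ^ 2 - γ ^ 2 + d ^ 2) ^ 2 + 4 * (t * β + γ * d) ^ 2 := by ring
      rw [identity, htsq]
      have hz : ((β ^ 2 + γ ^ 2 - d ^ 2) - β ^ 2 - γ ^ 2 + d ^ 2) = 0 := by ring
      rw [hz]
      exact aux_fin1 _ q d β γ htkey hqsq
    calc Real.sqrt (q / d) * Real.sqrt (‖x - (WithLp.equiv 2 (Fin 2 → ℝ)).symm ![α + t, 0]‖
          * ‖y - (WithLp.equiv 2 (Fin 2 → ℝ)).symm ![α + t, 0]‖)
        ≤ Real.sqrt (q / d) * Real.sqrt (q * d) :=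
          mul_le_mul_of_nonneg_left (Real.sqrt_le_sqrt hprod) (Real.sqrt_nonneg _)
      _ = q := by
          rw [← Real.sqrt_mul (by positivity)]
          have hqd : q / d * (q * d) = q ^ 2 := by field_simp
          rw [hqd, Real.sqrt_sq hq0]
  · -- Case 2 : q ≤ 2d
    intro hcase
    have hS : 0 < Real.sqrt (4 * d ^ 2 + q ^ 2) := Real.sqrt_pos.mpr (by positivity)
    apply main _ (by positivity)
    refine ⟨α, ?_⟩
    have hX := hdist x α
    have hY := hdist y α
    have hx0 : x 0 - α = γ := by rw [hα, hγ]; ring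
    have hy0 : y 0 - α = -γ := by rw [hα, hγ]; ring
    rw [hx0] at hX; rw [hy0] at hY
    have hprod : ‖x - (WithLp.equiv 2 (Fin 2 → ℝ)).symm ![α, 0]‖
        * ‖y - (WithLp.equiv 2 (Fin 2 → ℝ)).symm ![α, 0]‖ ≤ (4 * d ^ 2 + q ^ 2) / 4 := by
      apply le_of_pow_le_pow_left₀ two_ne_zero (by positivity)
      have expand : (‖x - (WithLp.equiv 2 (Fin 2 → ℝ)).symm ![α, 0]‖
          * ‖y - (WithLp.equiv 2 (Fin 2 → ℝ)).symm ![α, 0]‖) ^ 2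
          = (γ ^ 2 + (x 1) ^ 2) * ((-γ) ^ 2 + (y 1) ^ 2) := by
        rw [mul_pow, hX, hY]
      rw [expand, hdbx, hdby, hqsq]
      exact aux_case2 γ β d q
    rw [div_mul_eq_mul_div, div_le_iff₀ hS]
    have h2s : 2 * Real.sqrt (‖x - (WithLp.equiv 2 (Fin 2 → ℝ)).symm ![α, 0]‖
        * ‖y - (WithLp.equiv 2 (Fin 2 → ℝ)).symm ![α, 0]‖) ≤ Real.sqrt (4 * d ^ 2 + q ^ 2) := by
      apply (Real.le_sqrt (by positivity) (by positivity)).mpr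
      rw [mul_pow, Real.sq_sqrt (mul_nonneg (norm_nonneg _) (norm_nonneg _))]
      linarith [hprod]
    calc 2 * q * Real.sqrt (‖x - (WithLp.equiv 2 (Fin 2 → ℝ)).symm ![α, 0]‖
          * ‖y - (WithLp.equiv 2 (Fin 2 → ℝ)).symm ![α, 0]‖)
        = q * (2 * Real.sqrt (‖x - (WithLp.equiv 2 (Fin 2 → ℝ)).symm ![α, 0]‖
          * ‖y - (WithLp.equiv 2 (Fin 2 → ℝ)).symm ![α, 0]‖)) := by ring
      _ ≤ q * Real.sqrt (4 * d ^ 2 + q ^ 2) := mul_le_mul_of_nonneg_left h2s hq0
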